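/- arXiv:1301.1398 — 2 statements merged into one kernel-verified Lean document; each statement's English description precedes it below -/
import Mathlib

section
/- Let (g, ∇) be a Lie algebra and δ: g → Λ²g a coskew linear map, with ∂ and d the induced boundary and coboundary operators on Λ^* g. Then d∂ + ∂d = 0 on Λ^p g for p = 1 and p = 2 if and only if δ satisfies the compatibility condition δ[X,Y] = σ(X)(δY) - σ(Y)(δX) for all X, Y ∈ g and the involutivity ∇δ = 0: g → g. -/
open TensorProduct

/-- The wedge product `X₁ ∧ ⋯ ∧ X_p` of a list of vectors. -/
noncomputable def wedgeList (g : Type) [AddCommGroup g] [Module ℚ g] (l : List g) :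
    ExteriorAlgebra ℚ g := (l.map (ExteriorAlgebra.ι ℚ)).prod

/-- The map `g ⊗ g → Λ* g`, `X ⊗ Y ↦ ι X * ι Y`. -/
noncomputable def toExt (g : Type) [AddCommGroup g] [Module ℚ g] :
    g ⊗[ℚ] g →ₗ[ℚ] ExteriorAlgebra ℚ g :=
  TensorProduct.lift ((LinearMap.mul ℚ (ExteriorAlgebra ℚ g)).compl₁₂
    (ExteriorAlgebra.ι ℚ) (ExteriorAlgebra.ι ℚ))

/-- The diagonal adjoint action `σ(Y)` on `g ⊗ g` (hence on `Λ²g ⊂ g ⊗ g`). -/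
noncomputable def sig2 (g : Type) [LieRing g] [LieAlgebra ℚ g] (Y : g) :
    g ⊗[ℚ] g →ₗ[ℚ] g ⊗[ℚ] g :=
  TensorProduct.map (LieAlgebra.ad ℚ g Y) LinearMap.id +
    TensorProduct.map LinearMap.id (LieAlgebra.ad ℚ g Y)

/-- The bracket map `∇ : g ⊗ g → g`, `X ⊗ Y ↦ ⁅X, Y⁆`. -/
noncomputable def brm (g : Type) [LieRing g] [LieAlgebra ℚ g] :
    g ⊗[ℚ] g →ₗ[ℚ] g :=
  TensorProduct.lift (LieAlgebra.ad ℚ g : g →ₗ[ℚ] Module.End ℚ g)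


section Stmt3Aux

open TensorProduct

variable {g : Type}

noncomputable def B2 (g : Type) [AddCommGroup g] [Module ℚ g] :
    MultilinearMap ℚ (fun _ : Fin 2 => g) (g ⊗[ℚ] g) where
  toFun v := v 0 ⊗ₜ[ℚ] v 1 - v 1 ⊗ₜ[ℚ] v 0
  map_update_add' v i x y := by
    fin_cases i <;>
      simp [Function.update_apply, TensorProduct.add_tmul, TensorProduct.tmul_add] <;> abel
  map_update_smul' v i c x := by
    fin_cases i <;>
      simp [Function.update_apply, TensorProduct.smul_tmul', TensorProduct.tmul_smul,
        smul_sub]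

noncomputable def alt2 (g : Type) [AddCommGroup g] [Module ℚ g] :
    g [⋀^Fin 2]→ₗ[ℚ] (g ⊗[ℚ] g) :=
  { B2 g with
    map_eq_zero_of_eq' := by
      intro v i j hv hij
      fin_cases i <;> fin_cases j <;> simp_all [B2] }

noncomputable def phi (g : Type) [AddCommGroup g] [Module ℚ g] :
    ExteriorAlgebra ℚ g →ₗ[ℚ] g ⊗[ℚ] g :=
  ExteriorAlgebra.liftAlternating
    (fun i => match i with | 2 => alt2 g | _ => 0)

lemma phi_ι_mul_ι [AddCommGroup g] [Module ℚ g] (a b : g) :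
    phi g (ExteriorAlgebra.ι ℚ a * ExteriorAlgebra.ι ℚ b) = a ⊗ₜ[ℚ] b - b ⊗ₜ[ℚ] a := by
  have h : ExteriorAlgebra.ι ℚ a * ExteriorAlgebra.ι ℚ b
      = ExteriorAlgebra.ιMulti ℚ 2 ![a, b] := by
    simp [ExteriorAlgebra.ιMulti_apply, List.ofFn_succ]
  rw [h, phi, ExteriorAlgebra.liftAlternating_apply_ιMulti]
  simp [alt2, B2]

lemma toExt_tmul [AddCommGroup g] [Module ℚ g] (a b : g) :
    toExt g (a ⊗ₜ[ℚ] b) = ExteriorAlgebra.ι ℚ a * ExteriorAlgebra.ι ℚ b := by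
  simp [toExt]

lemma phi_toExt [AddCommGroup g] [Module ℚ g] (t : g ⊗[ℚ] g) :
    phi g (toExt g t) = t - TensorProduct.comm ℚ g g t := by
  induction t using TensorProduct.induction_on with
  | zero => simp
  | tmul a b => rw [toExt_tmul, phi_ι_mul_ι]; simp
  | add x y hx hy => rw [map_add, map_add, hx, hy, map_add]; abel

lemma antisym_eq_zero [AddCommGroup g] [Module ℚ g] (t : g ⊗[ℚ] g)
    (h1 : TensorProduct.comm ℚ g g t = -t) (h2 : toExt g t = 0) : t = 0 := by
  have h := phi_toExt t
  rw [h2, map_zero, h1, sub_neg_eq_add] at h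
  have : (2 : ℚ) • t = 0 := by rw [two_smul]; exact h.symm
  simpa using (smul_eq_zero.mp this).resolve_left (by norm_num)

lemma brm_tmul [LieRing g] [LieAlgebra ℚ g] (a b : g) : brm g (a ⊗ₜ[ℚ] b) = ⁅a, b⁆ := by
  simp [brm]

lemma sig2_tmul [LieRing g] [LieAlgebra ℚ g] (Y a b : g) :
    sig2 g Y (a ⊗ₜ[ℚ] b) = ⁅Y, a⁆ ⊗ₜ[ℚ] b + a ⊗ₜ[ℚ] ⁅Y, b⁆ := by
  simp [sig2]

lemma comm_sig2 [LieRing g] [LieAlgebra ℚ g] (Y : g) (t : g ⊗[ℚ] g) :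
    TensorProduct.comm ℚ g g (sig2 g Y t) = sig2 g Y (TensorProduct.comm ℚ g g t) := by
  induction t using TensorProduct.induction_on with
  | zero => simp
  | tmul a b => rw [sig2_tmul]; simp [sig2_tmul]; abel
  | add x y hx hy => simp only [map_add, hx, hy]

lemma ι_anticomm [AddCommGroup g] [Module ℚ g] (a b : g) :
    ExteriorAlgebra.ι ℚ a * ExteriorAlgebra.ι ℚ b
      = -(ExteriorAlgebra.ι ℚ b * ExteriorAlgebra.ι ℚ a) :=
  eq_neg_of_add_eq_zero_left (ExteriorAlgebra.ι_add_mul_swap a b)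

end Stmt3Aux

/-- for a Lie algebra `g` and a coskew `δ : g → Λ²g ⊂ g ⊗ g`,
`d∂ + ∂d = 0` on `Λ^p g` for `p = 1, 2` iff `δ` satisfies the compatibility
condition `δ[X,Y] = σ(X)(δY) - σ(Y)(δX)` and the involutivity `∇δ = 0`. -/
theorem stmt3 (g : Type) [LieRing g] [LieAlgebra ℚ g]
    (δ : g →ₗ[ℚ] g ⊗[ℚ] g)
    (hcoskew : ∀ X : g, TensorProduct.comm ℚ g g (δ X) = - δ X)
    (pa d : ExteriorAlgebra ℚ g →ₗ[ℚ] ExteriorAlgebra ℚ g)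
    (hpa : ∀ (p : ℕ) (X : Fin p → g),
      pa (wedgeList g (List.ofFn X)) =
        ∑ i : Fin p, ∑ j : Fin p, if (i : ℕ) < (j : ℕ) then
          ((-1 : ℚ) ^ ((i : ℕ) + (j : ℕ))) •
            (ExteriorAlgebra.ι ℚ ⁅X i, X j⁆ *
              wedgeList g (((List.ofFn X).eraseIdx (j : ℕ)).eraseIdx (i : ℕ)))
        else 0)
    (hd : ∀ (p : ℕ) (X : Fin p → g),
      d (wedgeList g (List.ofFn X)) =
        ∑ i : Fin p, ((-1 : ℚ) ^ ((i : ℕ) + 1)) •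
          (toExt g (δ (X i)) * wedgeList g ((List.ofFn X).eraseIdx (i : ℕ)))) :
    ((∀ X : g, d (pa (ExteriorAlgebra.ι ℚ X)) + pa (d (ExteriorAlgebra.ι ℚ X)) = 0) ∧
     (∀ X Y : g,
        d (pa (ExteriorAlgebra.ι ℚ X * ExteriorAlgebra.ι ℚ Y)) +
          pa (d (ExteriorAlgebra.ι ℚ X * ExteriorAlgebra.ι ℚ Y)) = 0)) ↔
    ((∀ X Y : g, δ ⁅X, Y⁆ = sig2 g X (δ Y) - sig2 g Y (δ X)) ∧
     brm g ∘ₗ δ = 0)  := by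
  set I := ExteriorAlgebra.ι ℚ (M := g) with hI
  -- small-degree evaluations
  have hpa1 : ∀ X : g, pa (I X) = 0 := by
    intro X
    have h := hpa 1 ![X]
    simpa [wedgeList, Fin.sum_univ_succ] using h
  have hd1 : ∀ X : g, d (I X) = -(toExt g (δ X)) := by
    intro X
    have h := hd 1 ![X]
    simpa [wedgeList, Fin.sum_univ_succ] using h
  have hpa2 : ∀ X Y : g, pa (I X * I Y) = -(I ⁅X, Y⁆) := by
    intro X Y
    have h := hpa 2 ![X, Y]
    simp [wedgeList, Fin.sum_univ_succ] at h
    simpa using h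
  have hd2 : ∀ X Y : g, d (I X * I Y)
      = -(toExt g (δ X) * I Y) + toExt g (δ Y) * I X := by
    intro X Y
    have h := hd 2 ![X, Y]
    simp [wedgeList, Fin.sum_univ_succ] at h
    simpa using h
  have hpa3 : ∀ X Y Z : g, pa (I X * (I Y * I Z))
      = -(I ⁅X, Y⁆ * I Z) + I ⁅X, Z⁆ * I Y - I ⁅Y, Z⁆ * I X := by
    intro X Y Z
    have h := hpa 3 ![X, Y, Z]
    simp [wedgeList, Fin.sum_univ_succ] at h
    rw [h]
    norm_num
    abel
  have hpa_toExt : ∀ t : g ⊗[ℚ] g, pa (toExt g t) = -(I (brm g t)) := by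
    intro t
    induction t using TensorProduct.induction_on with
    | zero => simp
    | tmul a b => rw [toExt_tmul, brm_tmul, hpa2]
    | add x y hx hy => simp only [map_add, hx, hy]; abel
  have key : ∀ (Y : g) (t : g ⊗[ℚ] g),
      pa (toExt g t * I Y) = -(I (brm g t) * I Y) - toExt g (sig2 g Y t) := by
    intro Y t
    induction t using TensorProduct.induction_on with
    | zero => simp
    | tmul a b =>
      have toExtI : ∀ u v : g, toExt g (u ⊗ₜ[ℚ] v) = I u * I v := toExt_tmul
      rw [toExtI, brm_tmul, sig2_tmul, mul_assoc, hpa3, map_add, toExtI, toExtI]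
      have hs1 : (⁅a, Y⁆ : g) = -⁅Y, a⁆ := (lie_skew a Y).symm
      have hs2 : (⁅b, Y⁆ : g) = -⁅Y, b⁆ := (lie_skew b Y).symm
      rw [hs1, hs2]
      have hac : I a * I ⁅Y, b⁆ = -(I ⁅Y, b⁆ * I a) := ι_anticomm a ⁅Y, b⁆
      rw [hac]
      simp only [map_neg, neg_mul]
      abel
    | add x y hx hy =>
      simp only [map_add, add_mul, hx, hy]
      abel
  -- the main computation in degree 2
  have main2 : ∀ X Y : g,
      d (pa (I X * I Y)) + pa (d (I X * I Y))
        = toExt g (δ ⁅X, Y⁆ + sig2 g Y (δ X) - sig2 g X (δ Y))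
          + (I (brm g (δ X)) * I Y - I (brm g (δ Y)) * I X) := by
    intro X Y
    rw [hpa2, map_neg, hd1, hd2, map_add, map_neg, key, key, neg_neg]
    simp only [map_add, map_sub]
    abel
  constructor
  · rintro ⟨h1, h2⟩
    have hbrm : ∀ X : g, brm g (δ X) = 0 := by
      intro X
      have := h1 X
      rw [hpa1, map_zero, hd1, zero_add, map_neg, hpa_toExt, neg_neg] at this
      exact (ExteriorAlgebra.ι_eq_zero_iff _).mp this
    constructor
    · intro X Y
      have h := h2 X Y
      rw [main2, hbrm, hbrm] at h
      simp only [hI, map_zero, zero_mul, sub_zero, add_zero] at h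
      have hE : δ ⁅X, Y⁆ + sig2 g Y (δ X) - sig2 g X (δ Y) = 0 := by
        apply antisym_eq_zero _ _ h
        rw [map_sub, map_add, comm_sig2, comm_sig2, hcoskew, hcoskew, hcoskew]
        simp only [map_neg]
        abel
      have h2' := sub_eq_zero.mp hE
      have := eq_sub_of_add_eq h2'
      exact this
    · ext X
      simpa using hbrm X
  · rintro ⟨hcomp, hbrm⟩
    have hbrm' : ∀ X : g, brm g (δ X) = 0 := fun X => by simpa using LinearMap.congr_fun hbrm X
    constructor
    · intro X
      rw [hpa1, map_zero, hd1, zero_add, map_neg, hpa_toExt, neg_neg, hbrm']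
      simp
    · intro X Y
      rw [main2, hbrm', hbrm']
      have hE : δ ⁅X, Y⁆ + sig2 g Y (δ X) - sig2 g X (δ Y) = 0 := by
        rw [hcomp X Y]; abel
      rw [hE]
      simp
end

section
/- Let g be a Lie algebra, A ∈ Λ²g, and E_A: Λ^*g → Λ^{*+1+1}g the multiplication u ↦ A∧u. Then (∂E_A - E_A∂ + E_{∇A})(X_1∧⋯∧X_p) = Σ_{i=1}^p (-1)^i σ(X_i)(A)∧X_1∧⋯(omit i)⋯∧X_p, where ∇A ∈ g is the image of A under the bracket and σ(X_i) is the adjoint action on Λ²g. -/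
open TensorProduct

section helpers
variable (g : Type) [AddCommGroup g] [Module ℚ g]

lemma wedge_cons (x : g) (l : List g) :
    wedgeList g (x :: l) = ExteriorAlgebra.ι ℚ x * wedgeList g l := by
  simp [wedgeList]

lemma ι_anticomm_s11 (x y : g) :
    ExteriorAlgebra.ι ℚ x * ExteriorAlgebra.ι ℚ y = -(ExteriorAlgebra.ι ℚ y * ExteriorAlgebra.ι ℚ x) :=
  eq_neg_of_add_eq_zero_left (ExteriorAlgebra.ι_add_mul_swap x y)

lemma swap1 (x y : g) (u : ExteriorAlgebra ℚ g) :
    ExteriorAlgebra.ι ℚ x * (ExteriorAlgebra.ι ℚ y * u) =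
    -(ExteriorAlgebra.ι ℚ y * (ExteriorAlgebra.ι ℚ x * u)) := by
  rw [← mul_assoc, ι_anticomm_s11, neg_mul, mul_assoc]

lemma comm2 (c a b : g) (u : ExteriorAlgebra ℚ g) :
    ExteriorAlgebra.ι ℚ c * (ExteriorAlgebra.ι ℚ a * (ExteriorAlgebra.ι ℚ b * u)) =
    ExteriorAlgebra.ι ℚ a * (ExteriorAlgebra.ι ℚ b * (ExteriorAlgebra.ι ℚ c * u)) := by
  rw [← mul_assoc, ← mul_assoc, ι_anticomm_s11 g c a, ← mul_assoc, neg_mul, mul_assoc,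
    ι_anticomm_s11 g c b]
  noncomm_ring
end helpers

lemma key (g : Type) [LieRing g] [LieAlgebra ℚ g]
    (pa : ExteriorAlgebra ℚ g →ₗ[ℚ] ExteriorAlgebra ℚ g)
    (hpa : ∀ (p : ℕ) (X : Fin p → g),
      pa (wedgeList g (List.ofFn X)) =
        ∑ i : Fin p, ∑ j : Fin p, if (i : ℕ) < (j : ℕ) then
          ((-1 : ℚ) ^ ((i : ℕ) + (j : ℕ))) •
            (ExteriorAlgebra.ι ℚ ⁅X i, X j⁆ *
              wedgeList g (((List.ofFn X).eraseIdx (j : ℕ)).eraseIdx (i : ℕ)))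
        else 0)
    (σE : g → ExteriorAlgebra ℚ g →ₗ[ℚ] ExteriorAlgebra ℚ g)
    (hσ : ∀ (Y : g) (p : ℕ) (X : Fin p → g),
      σE Y (wedgeList g (List.ofFn X)) =
        ∑ i : Fin p, wedgeList g ((List.ofFn X).set (i : ℕ) ⁅Y, X i⁆))
    (nab : ExteriorAlgebra ℚ g →ₗ[ℚ] ExteriorAlgebra ℚ g)
    (hnab : ∀ a b : g,
      nab (ExteriorAlgebra.ι ℚ a * ExteriorAlgebra.ι ℚ b) = ExteriorAlgebra.ι ℚ ⁅a, b⁆)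
    (a b : g) (p : ℕ) (X : Fin p → g) :
    pa (ExteriorAlgebra.ι ℚ a * ExteriorAlgebra.ι ℚ b * wedgeList g (List.ofFn X))
      - ExteriorAlgebra.ι ℚ a * ExteriorAlgebra.ι ℚ b * pa (wedgeList g (List.ofFn X))
      + nab (ExteriorAlgebra.ι ℚ a * ExteriorAlgebra.ι ℚ b) * wedgeList g (List.ofFn X) =
    ∑ i : Fin p, ((-1 : ℚ) ^ ((i : ℕ) + 1)) •
      (σE (X i) (ExteriorAlgebra.ι ℚ a * ExteriorAlgebra.ι ℚ b) *
        wedgeList g ((List.ofFn X).eraseIdx (i : ℕ))) := by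
  have hY : List.ofFn (Fin.cons a (Fin.cons b X) : Fin (p+2) → g) = a :: b :: List.ofFn X := by
    simp [List.ofFn_succ]
  have h1 : ExteriorAlgebra.ι ℚ a * ExteriorAlgebra.ι ℚ b * wedgeList g (List.ofFn X)
      = wedgeList g (List.ofFn (Fin.cons a (Fin.cons b X) : Fin (p+2) → g)) := by
    rw [hY, wedge_cons, wedge_cons, mul_assoc]
  -- the double sum over the tail equals A * pa (w X)
  have hS2 : (∑ x : Fin p, ∑ y : Fin p,
        if x < y then
          ((-1 : ℚ)) ^ ((x:ℕ) + 1 + 1 + ((y:ℕ) + 1 + 1)) •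
            (ExteriorAlgebra.ι ℚ ⁅X x, X y⁆ *
              wedgeList g (a :: b :: ((List.ofFn X).eraseIdx (y:ℕ)).eraseIdx (x:ℕ)))
        else 0)
      = ExteriorAlgebra.ι ℚ a * ExteriorAlgebra.ι ℚ b * pa (wedgeList g (List.ofFn X)) := by
    rw [hpa, Finset.mul_sum]
    refine Finset.sum_congr rfl fun i _ => ?_
    rw [Finset.mul_sum]
    refine Finset.sum_congr rfl fun j _ => ?_
    rw [mul_ite, mul_zero]
    simp only [Fin.lt_def]
    by_cases h : (i:ℕ) < (j:ℕ)
    · rw [if_pos h, if_pos h, wedge_cons, wedge_cons, mul_smul_comm]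
      have hsgn : ((-1 : ℚ)) ^ ((i:ℕ) + 1 + 1 + ((j:ℕ) + 1 + 1)) = (-1 : ℚ) ^ ((i:ℕ) + (j:ℕ)) := by
        ring
      rw [hsgn, mul_assoc, comm2]
    · rw [if_neg h, if_neg h]
  -- compute pa (A * w X)
  have hmain : pa (ExteriorAlgebra.ι ℚ a * ExteriorAlgebra.ι ℚ b * wedgeList g (List.ofFn X))
      = -(ExteriorAlgebra.ι ℚ ⁅a, b⁆ * wedgeList g (List.ofFn X))
        + (∑ k : Fin p, ((-1 : ℚ)) ^ ((k:ℕ) + 1 + 1) •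
            (ExteriorAlgebra.ι ℚ ⁅a, X k⁆ *
              wedgeList g (b :: (List.ofFn X).eraseIdx (k:ℕ))))
        + ((∑ k : Fin p, ((-1 : ℚ)) ^ (1 + ((k:ℕ) + 1 + 1)) •
            (ExteriorAlgebra.ι ℚ ⁅b, X k⁆ *
              wedgeList g (a :: (List.ofFn X).eraseIdx (k:ℕ))))
          + ExteriorAlgebra.ι ℚ a * ExteriorAlgebra.ι ℚ b * pa (wedgeList g (List.ofFn X))) := by
    rw [h1, hpa]
    simp only [hY, Fin.sum_univ_succ, Fin.cons_succ, Fin.cons_zero, Fin.val_succ, Fin.val_zero,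
      List.eraseIdx_cons_succ, List.eraseIdx_cons_zero, Nat.zero_add]
    norm_num
    rw [hS2]
  have hw2 : ExteriorAlgebra.ι ℚ a * ExteriorAlgebra.ι ℚ b
      = wedgeList g (List.ofFn ![a, b]) := by
    simp [wedgeList]
  have hσab : ∀ Yv : g, σE Yv (ExteriorAlgebra.ι ℚ a * ExteriorAlgebra.ι ℚ b)
      = ExteriorAlgebra.ι ℚ ⁅Yv, a⁆ * ExteriorAlgebra.ι ℚ b
        + ExteriorAlgebra.ι ℚ a * ExteriorAlgebra.ι ℚ ⁅Yv, b⁆ := by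
    intro Yv
    rw [hw2, hσ]
    simp [Fin.sum_univ_two, wedgeList]
  have hR : (∑ i : Fin p, ((-1 : ℚ) ^ ((i : ℕ) + 1)) •
      (σE (X i) (ExteriorAlgebra.ι ℚ a * ExteriorAlgebra.ι ℚ b) *
        wedgeList g ((List.ofFn X).eraseIdx (i : ℕ))))
      = (∑ k : Fin p, ((-1 : ℚ)) ^ ((k:ℕ) + 1 + 1) •
            (ExteriorAlgebra.ι ℚ ⁅a, X k⁆ *
              wedgeList g (b :: (List.ofFn X).eraseIdx (k:ℕ))))
        + (∑ k : Fin p, ((-1 : ℚ)) ^ (1 + ((k:ℕ) + 1 + 1)) •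
            (ExteriorAlgebra.ι ℚ ⁅b, X k⁆ *
              wedgeList g (a :: (List.ofFn X).eraseIdx (k:ℕ)))) := by
    rw [← Finset.sum_add_distrib]
    refine Finset.sum_congr rfl fun i _ => ?_
    rw [hσab (X i), wedge_cons, wedge_cons, add_mul]
    have h1 : ⁅X i, a⁆ = -⁅a, X i⁆ := (neg_eq_iff_eq_neg.mp (lie_skew a (X i))).symm ▸ rfl
    have h2 : ⁅X i, b⁆ = -⁅b, X i⁆ := (neg_eq_iff_eq_neg.mp (lie_skew b (X i))).symm ▸ rfl
    rw [h1, h2, map_neg, map_neg]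
    simp only [neg_mul, mul_neg, mul_assoc, neg_neg]
    rw [swap1 g a ⁅b, X i⁆]
    simp only [smul_add, smul_neg, neg_neg]
    module
  rw [hmain, hnab, hR]
  abel


/-- for a Lie algebra `g` and `A ∈ Λ²g`, with `E_A` left multiplication by
`A`, one has `(∂E_A - E_A∂ + E_{∇A})(X₁∧⋯∧X_p) = Σ_i (-1)^i σ(X_i)(A)∧X₁∧⋯ô_i⋯∧X_p`. -/
theorem stmt11 (g : Type) [LieRing g] [LieAlgebra ℚ g]
    (pa : ExteriorAlgebra ℚ g →ₗ[ℚ] ExteriorAlgebra ℚ g)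
    (hpa : ∀ (p : ℕ) (X : Fin p → g),
      pa (wedgeList g (List.ofFn X)) =
        ∑ i : Fin p, ∑ j : Fin p, if (i : ℕ) < (j : ℕ) then
          ((-1 : ℚ) ^ ((i : ℕ) + (j : ℕ))) •
            (ExteriorAlgebra.ι ℚ ⁅X i, X j⁆ *
              wedgeList g (((List.ofFn X).eraseIdx (j : ℕ)).eraseIdx (i : ℕ)))
        else 0)
    (σE : g → ExteriorAlgebra ℚ g →ₗ[ℚ] ExteriorAlgebra ℚ g)
    (hσ : ∀ (Y : g) (p : ℕ) (X : Fin p → g),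
      σE Y (wedgeList g (List.ofFn X)) =
        ∑ i : Fin p, wedgeList g ((List.ofFn X).set (i : ℕ) ⁅Y, X i⁆))
    (nab : ExteriorAlgebra ℚ g →ₗ[ℚ] ExteriorAlgebra ℚ g)
    (hnab : ∀ a b : g,
      nab (ExteriorAlgebra.ι ℚ a * ExteriorAlgebra.ι ℚ b) = ExteriorAlgebra.ι ℚ ⁅a, b⁆)
    (A : ExteriorAlgebra ℚ g)
    (hA : A ∈ (LinearMap.range (ExteriorAlgebra.ι ℚ (M := g)) ^ 2 :
      Submodule ℚ (ExteriorAlgebra ℚ g))) :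
    ∀ (p : ℕ) (X : Fin p → g),
      pa (A * wedgeList g (List.ofFn X)) - A * pa (wedgeList g (List.ofFn X)) +
        nab A * wedgeList g (List.ofFn X) =
      ∑ i : Fin p, ((-1 : ℚ) ^ ((i : ℕ) + 1)) •
        (σE (X i) A * wedgeList g ((List.ofFn X).eraseIdx (i : ℕ))) := by
  rw [pow_two] at hA
  intro p X
  refine Submodule.mul_induction_on hA ?_ ?_
  · rintro _ ⟨x, rfl⟩ _ ⟨y, rfl⟩
    exact key g pa hpa σE hσ nab hnab x y p X
  · intro u v hu hv
    simp only [add_mul, map_add, smul_add, Finset.sum_add_distrib] at *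
    rw [← hu, ← hv]
    abel
end
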